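/- Let x_0 ≥ 0 and ℓ ≥ 1 be integers, κ > 0, t ≥ 0, and let e_1, e_2, … be independent random variables, each exponentially distributed with rate 1. Set c = max(x_0 + 1, ℓ), δ = (1 - e^{-cκt})^{1/ℓ}, and C = (1 - e^{-cκt})^{-1 - x_0/ℓ}. Then for every integer M ≥ ℓ + x_0, writing n = ⌊(M - x_0)/ℓ⌋ + 1, the probability that ∑_{i=1}^{n} e_i/(κ(1 + x_0 + (i-1)ℓ)) ≤ t is at most C·δ^M, where 0 ≤ δ < 1. -/

import Mathlib

open MeasureTheory ProbabilityTheory Real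
open scoped ENNReal NNReal

section Aux
open Set

lemma calc_core (n : ℕ) (a lam t : ℝ) (ha : 0 < a) (hlam : 0 < lam)
    (hle : lam ≤ a * (n + 1)) (ht : 0 ≤ t) :
    ∫ u in (0:ℝ)..(lam * t), Real.exp (-u) * (1 - Real.exp (-(a * t) + a * u / lam)) ^ n
      ≤ (1 - Real.exp (-(a * t))) ^ (n + 1) := by
  set A : ℝ → ℝ := fun u => Real.exp (-(a * t) + a * u / lam) with hA
  have hAderiv : ∀ u : ℝ, HasDerivAt A (a / lam * A u) u := by
    intro u
    have h1 : HasDerivAt (fun u : ℝ => -(a * t) + a * u / lam) (a / lam) u := by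
      have := ((hasDerivAt_id u).const_mul a).div_const lam
      simpa using this.const_add (-(a * t))
    have := h1.exp
    simpa [hA, mul_comm] using this
  set F : ℝ → ℝ := fun u => -(Real.exp (-u) * (1 - A u) ^ (n + 1)) with hF
  set G : ℝ → ℝ := fun u =>
    Real.exp (-u) * (1 - A u) ^ (n + 1)
      + Real.exp (-u) * ((n + 1) * (1 - A u) ^ n * (a / lam * A u)) with hG
  have hFderiv : ∀ u : ℝ, HasDerivAt F (G u) u := by
    intro u
    have h2 : HasDerivAt (fun u : ℝ => Real.exp (-u)) (-Real.exp (-u)) u := by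
      simpa using (hasDerivAt_neg u).exp
    have h3 : HasDerivAt (fun u => (1 - A u) ^ (n + 1))
        ((n + 1) * (1 - A u) ^ n * (-(a / lam * A u))) u := by
      have := ((hAderiv u).const_sub 1).pow (n + 1)
      simpa using (((hAderiv u).const_sub 1).fun_pow (n + 1))
    have := (h2.mul h3).neg
    refine this.congr_deriv ?_
    simp only [hG]
    ring
  have hGcont : Continuous G := by
    have hAc : Continuous A := by fun_prop
    fun_prop
  have hint : ∫ u in (0:ℝ)..(lam * t), G u = F (lam * t) - F 0 := by
    apply intervalIntegral.integral_eq_sub_of_hasDerivAt (fun x _ => hFderiv x)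
    exact hGcont.intervalIntegrable _ _
  have hltt : 0 ≤ lam * t := by positivity
  have hmono : ∫ u in (0:ℝ)..(lam * t), Real.exp (-u) * (1 - A u) ^ n
      ≤ ∫ u in (0:ℝ)..(lam * t), G u := by
    apply intervalIntegral.integral_mono_on hltt
    · exact (by fun_prop : Continuous fun u => Real.exp (-u) * (1 - A u) ^ n).intervalIntegrable _ _
    · exact hGcont.intervalIntegrable _ _
    · intro u hu
      have hApos : 0 < A u := Real.exp_pos _
      have hAle : A u ≤ 1 := by
        have h1 : a * u ≤ a * (lam * t) := mul_le_mul_of_nonneg_left hu.2 ha.le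
        have h2 : a * u / lam ≤ a * t := by rw [div_le_iff₀ hlam]; nlinarith
        have harg : -(a * t) + a * u / lam ≤ 0 := by linarith
        calc A u = Real.exp (-(a * t) + a * u / lam) := rfl
          _ ≤ 1 := Real.exp_le_one_iff.mpr harg
      have h1A : 0 ≤ (1 - A u) ^ n := pow_nonneg (by linarith) n
      have hcoef : 1 ≤ ((n : ℝ) + 1) * (a / lam) := by
        rw [← mul_div_assoc]
        exact (one_le_div hlam).mpr (by linarith)
      have hexp : (0 : ℝ) < Real.exp (-u) := Real.exp_pos _
      have expand : G u - Real.exp (-u) * (1 - A u) ^ n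
          = Real.exp (-u) * ((1 - A u) ^ n * (A u * (((n : ℝ) + 1) * (a / lam) - 1))) := by
        simp only [hG]
        ring
      have hfac : 0 ≤ Real.exp (-u) * ((1 - A u) ^ n * (A u * (((n : ℝ) + 1) * (a / lam) - 1))) :=
        mul_nonneg hexp.le (mul_nonneg h1A (mul_nonneg hApos.le (by linarith)))
      rw [← sub_nonneg, expand]; exact hfac
  have hA0 : A 0 = Real.exp (-(a * t)) := by simp [hA]
  have hF0 : F 0 = -(1 - Real.exp (-(a * t))) ^ (n + 1) := by
    simp [hF, hA0]
  have hAt : A (lam * t) = 1 := by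
    have : -(a * t) + a * (lam * t) / lam = 0 := by field_simp; ring
    simp [hA, this]
  have hFt : F (lam * t) = 0 := by simp [hF, hAt]
  exact hmono.trans (le_of_eq (by rw [hint, hFt, hF0]; ring))


lemma step_lintegral (n : ℕ) (a lam t : ℝ) (ha : 0 < a) (hlam : 0 < lam)
    (hle : lam ≤ a * (n + 1)) (ht : 0 ≤ t) :
    ∫⁻ u, ENNReal.ofReal
        (if 0 ≤ t - u / lam then (1 - Real.exp (-(a * (t - u / lam)))) ^ n else 0)
      ∂(expMeasure 1)
      ≤ ENNReal.ofReal ((1 - Real.exp (-(a * t))) ^ (n + 1)) := by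
  set f : ℝ → ℝ :=
    fun u => (if 0 ≤ t - u / lam then (1 - Real.exp (-(a * (t - u / lam)))) ^ n else 0) with hf
  have hfmeas : Measurable f := by
    apply Measurable.ite
    · exact measurableSet_le measurable_const (by fun_prop)
    · fun_prop
    · exact measurable_const
  set H : ℝ → ℝ := fun u => Real.exp (-u) * (1 - Real.exp (-(a * t) + a * u / lam)) ^ n with hH
  set h : ℝ → ℝ := (Icc (0:ℝ) (lam * t)).indicator H with hh
  have hltt : 0 ≤ lam * t := by positivity
  have hreal : ∀ u, (if 0 ≤ u then 1 * Real.exp (-(1 * u)) else 0) * f u = h u := by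
    intro u
    simp only [hf, hh, one_mul]
    by_cases h0 : 0 ≤ u
    · by_cases h1 : 0 ≤ t - u / lam
      · have hu2 : u ≤ lam * t := by
          have : u / lam ≤ t := by linarith
          calc u = lam * (u / lam) := by field_simp
            _ ≤ lam * t := by nlinarith
        rw [if_pos h0, if_pos h1, Set.indicator_of_mem (Set.mem_Icc.mpr ⟨h0, hu2⟩)]
        simp only [hH]
        rw [show -(a * (t - u / lam)) = -(a * t) + a * u / lam by ring]
      · have hnot : u ∉ Icc 0 (lam * t) := by
          intro hmem
          apply h1
          have : u / lam ≤ t := by rw [div_le_iff₀ hlam]; nlinarith [hmem.2]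
          linarith
        rw [if_pos h0, if_neg h1, Set.indicator_of_notMem hnot]
        ring
    · rw [if_neg h0, Set.indicator_of_notMem (fun hmem => h0 hmem.1)]
      ring
  have hHcont : Continuous H := by fun_prop
  have hhint : Integrable h := by
    rw [hh]
    exact (hHcont.integrableOn_Icc).integrable_indicator measurableSet_Icc
  have hhpos : 0 ≤ h := by
    rw [hh]
    apply Set.indicator_nonneg
    intro x hx
    have hAle : Real.exp (-(a * t) + a * x / lam) ≤ 1 := by
      rw [Real.exp_le_one_iff]
      have h2 : a * x / lam ≤ a * t := by rw [div_le_iff₀ hlam]; nlinarith [hx.1, hx.2]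
      linarith
    simp only [hH]
    exact mul_nonneg (Real.exp_pos _).le (pow_nonneg (by linarith) n)
  calc ∫⁻ u, ENNReal.ofReal (f u) ∂(expMeasure 1)
      = ∫⁻ u, exponentialPDF 1 u * ENNReal.ofReal (f u) := by
        show ∫⁻ u, ENNReal.ofReal (f u) ∂(volume.withDensity (exponentialPDF 1)) = _
        rw [lintegral_withDensity_eq_lintegral_mul _
          (show Measurable (exponentialPDF 1) from (measurable_exponentialPDFReal 1).ennreal_ofReal) hfmeas.ennreal_ofReal]
        rfl
    _ = ∫⁻ u, ENNReal.ofReal (h u) := by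
        apply lintegral_congr
        intro u
        rw [exponentialPDF_eq, ← ENNReal.ofReal_mul (by positivity), hreal u]
    _ = ENNReal.ofReal (∫ u, h u) := (ofReal_integral_eq_lintegral_ofReal hhint
        (Filter.Eventually.of_forall hhpos)).symm
    _ ≤ ENNReal.ofReal ((1 - Real.exp (-(a * t))) ^ (n + 1)) := by
        apply ENNReal.ofReal_le_ofReal
        rw [hh, MeasureTheory.integral_indicator measurableSet_Icc,
          MeasureTheory.integral_Icc_eq_integral_Ioc,
          ← intervalIntegral.integral_of_le hltt]
        exact calc_core n a lam t ha hlam hle ht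

lemma prob_bound {Ω : Type*} [MeasurableSpace Ω] (P : Measure Ω) [IsProbabilityMeasure P]
    (e : ℕ → Ω → ℝ) (he_meas : ∀ i, Measurable (e i))
    (he_indep : iIndepFun e P)
    (he_law : ∀ i, P.map (e i) = expMeasure 1)
    (a : ℝ) (ha : 0 < a) (lam : ℕ → ℝ) (hpos : ∀ i, 1 ≤ i → 0 < lam i) :
    ∀ (n : ℕ), (∀ i ∈ Finset.Icc 1 n, lam i ≤ a * i) → ∀ (t : ℝ), 0 ≤ t →
    P {ω | ∑ i ∈ Finset.Icc 1 n, e i ω / lam i ≤ t}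
      ≤ ENNReal.ofReal ((1 - Real.exp (-(a * t))) ^ n) := by
  set g : ℕ → Ω → ℝ := fun i ω => e i ω / lam i with hg
  have hg_meas : ∀ i, Measurable (g i) := fun i => (he_meas i).div_const _
  have hg_indep : iIndepFun g P :=
    he_indep.comp (fun i x => x / lam i) (fun i => measurable_id.div_const _)
  have h0i : ∀ i, ∀ᵐ ω ∂P, 0 ≤ e i ω := by
    intro i
    have hnull : P {ω | e i ω < 0} = 0 := by
      have heq : {ω | e i ω < 0} = e i ⁻¹' (Iio 0) := rfl
      rw [heq, ← Measure.map_apply (he_meas i) measurableSet_Iio, he_law i]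
      show (volume.withDensity (exponentialPDF 1)) (Iio 0) = 0
      rw [withDensity_apply _ measurableSet_Iio]
      exact lintegral_exponentialPDF_of_nonpos le_rfl
    refine (ae_iff).mpr ?_
    simpa [not_le] using hnull
  intro n
  induction n with
  | zero =>
    intro _ t ht
    have : Finset.Icc 1 0 = (∅ : Finset ℕ) := by simp
    rw [this]
    simp [ht]
  | succ n ih =>
    intro hle t ht
    have hle' : ∀ i ∈ Finset.Icc 1 n, lam i ≤ a * i := by
      intro i hi
      rw [Finset.mem_Icc] at hi
      exact hle i (Finset.mem_Icc.mpr ⟨hi.1, hi.2.trans (Nat.le_succ n)⟩)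
    set S : Ω → ℝ := fun ω => ∑ i ∈ Finset.Icc 1 n, g i ω with hS
    have hS_meas : Measurable S := Finset.measurable_sum _ (fun i _ => hg_meas i)
    set X : Ω → ℝ := g (n + 1) with hX
    have hX_meas : Measurable X := hg_meas _
    have hindep : IndepFun X S P := by
      have h1 := hg_indep.indepFun_finset_sum_of_notMem hg_meas
        (by simp : (n + 1) ∉ Finset.Icc 1 n)
      have heq : (∑ j ∈ Finset.Icc 1 n, g j) = S := by
        funext ω; simp [hS, Finset.sum_apply]
      rw [heq] at h1
      exact h1.symm
    have hSnonneg : ∀ᵐ ω ∂P, 0 ≤ S ω := by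
      filter_upwards [ae_all_iff.mpr h0i] with ω hω
      exact Finset.sum_nonneg fun i hi => div_nonneg (hω i) (hpos i (Finset.mem_Icc.mp hi).1).le
    have hset : {ω | ∑ i ∈ Finset.Icc 1 (n + 1), e i ω / lam i ≤ t} = {ω | X ω + S ω ≤ t} := by
      ext ω
      simp only [Set.mem_setOf_eq, hS, hX, hg]
      rw [Finset.sum_Icc_succ_top (by omega : 1 ≤ n + 1)]
      constructor <;> intro h <;> linarith
    have hpair_meas : Measurable (fun ω => (X ω, S ω)) := hX_meas.prodMk hS_meas
    have hsetm : MeasurableSet {p : ℝ × ℝ | p.1 + p.2 ≤ t} :=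
      measurableSet_le (by fun_prop) measurable_const
    haveI : IsProbabilityMeasure (P.map S) := Measure.isProbabilityMeasure_map hS_meas.aemeasurable
    haveI : IsProbabilityMeasure (P.map X) := Measure.isProbabilityMeasure_map hX_meas.aemeasurable
    have hmap : P.map (fun ω => (X ω, S ω)) = (P.map X).prod (P.map S) :=
      (indepFun_iff_map_prod_eq_prod_map_map hX_meas.aemeasurable hS_meas.aemeasurable).mp hindep
    have hPeq : P {ω | X ω + S ω ≤ t} = ∫⁻ x, P {ω | S ω ≤ t - x} ∂(P.map X) := by
      have h1 : P {ω | X ω + S ω ≤ t}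
          = P.map (fun ω => (X ω, S ω)) {p : ℝ × ℝ | p.1 + p.2 ≤ t} := by
        rw [Measure.map_apply hpair_meas hsetm]
        rfl
      rw [h1, hmap, Measure.prod_apply hsetm]
      congr 1
      funext x
      have h2 : (Prod.mk x ⁻¹' {p : ℝ × ℝ | p.1 + p.2 ≤ t}) = Iic (t - x) := by
        ext y
        simp only [Set.mem_preimage, Set.mem_setOf_eq, Set.mem_Iic]
        constructor <;> intro <;> linarith
      rw [h2, Measure.map_apply hS_meas measurableSet_Iic]
      rfl
    set FB : ℝ → ℝ≥0∞ := fun x =>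
      ENNReal.ofReal (if 0 ≤ t - x then (1 - Real.exp (-(a * (t - x)))) ^ n else 0) with hFB
    have hFB_meas : Measurable FB := by
      apply Measurable.ennreal_ofReal
      apply Measurable.ite
      · exact measurableSet_le measurable_const (by fun_prop)
      · fun_prop
      · exact measurable_const
    have hbound : ∀ x : ℝ, P {ω | S ω ≤ t - x} ≤ FB x := by
      intro x
      by_cases hx : 0 ≤ t - x
      · rw [hFB]
        simp only [if_pos hx]
        exact ih hle' (t - x) hx
      · have hz : P {ω | S ω ≤ t - x} = 0 := by
          have hae : ∀ᵐ ω ∂P, ¬ (S ω ≤ t - x) := by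
            filter_upwards [hSnonneg] with ω hω
            intro hc
            linarith [not_le.mp hx]
          simpa [not_not] using ae_iff.mp hae
        rw [hz]
        exact zero_le
    have hdiv : Measurable (fun y : ℝ => y / lam (n + 1)) := measurable_id.div_const _
    have hmapX : P.map X = (expMeasure 1).map (fun y : ℝ => y / lam (n + 1)) := by
      rw [← he_law (n + 1), Measure.map_map hdiv (he_meas (n + 1))]
      rfl
    have hlam' : lam (n + 1) ≤ a * ((n : ℝ) + 1) := by
      have := hle (n + 1) (Finset.mem_Icc.mpr ⟨by omega, le_refl _⟩)
      push_cast at this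
      linarith
    calc P {ω | ∑ i ∈ Finset.Icc 1 (n + 1), e i ω / lam i ≤ t}
        = ∫⁻ x, P {ω | S ω ≤ t - x} ∂(P.map X) := by rw [hset, hPeq]
      _ ≤ ∫⁻ x, FB x ∂(P.map X) := lintegral_mono hbound
      _ = ∫⁻ u, FB (u / lam (n + 1)) ∂(expMeasure 1) := by
          rw [hmapX, lintegral_map hFB_meas hdiv]
      _ ≤ ENNReal.ofReal ((1 - Real.exp (-(a * t))) ^ (n + 1)) :=
          step_lintegral n a (lam (n + 1)) t ha (hpos _ (by omega)) hlam' ht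


end Aux

/-- For integers `x₀ ≥ 0`, `ℓ ≥ 1`, `κ > 0`, `t ≥ 0`, independent
rate-1 exponentials `e i`, with `c = max (x₀+1) ℓ`, `δ = (1-e^{-cκt})^{1/ℓ}` and
`C = (1-e^{-cκt})^{-1-x₀/ℓ}`: for every `M ≥ ℓ + x₀`, with `n = ⌊(M-x₀)/ℓ⌋ + 1`,
`P(∑_{i=1}^n e i / (κ(1+x₀+(i-1)ℓ)) ≤ t) ≤ C δ^M`, and `0 ≤ δ < 1`. -/
theorem stmt5 {Ω : Type*} [MeasurableSpace Ω] (P : Measure Ω) [IsProbabilityMeasure P]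
    (x₀ ℓ : ℕ) (hℓ : 1 ≤ ℓ) (κ t : ℝ) (hκ : 0 < κ) (ht : 0 ≤ t)
    (e : ℕ → Ω → ℝ) (he_meas : ∀ i, Measurable (e i))
    (he_indep : iIndepFun e P)
    (he_law : ∀ i, P.map (e i) = expMeasure 1)
    (c : ℕ) (hc : c = max (x₀ + 1) ℓ)
    (δ C : ℝ)
    (hδ : δ = (1 - Real.exp (-(c : ℝ) * κ * t)) ^ ((1 : ℝ) / (ℓ : ℝ)))
    (hC : C = (1 - Real.exp (-(c : ℝ) * κ * t)) ^ (-1 - (x₀ : ℝ) / (ℓ : ℝ)))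
    (M : ℕ) (hM : ℓ + x₀ ≤ M) (n : ℕ) (hn : n = (M - x₀) / ℓ + 1) :
    0 ≤ δ ∧ δ < 1 ∧
      P {ω | ∑ i ∈ Finset.Icc 1 n, e i ω / (κ * (1 + x₀ + (i - 1) * ℓ)) ≤ t}
        ≤ ENNReal.ofReal (C * δ ^ M) := by
  have hc1 : 1 ≤ c := by omega
  have hcx : x₀ + 1 ≤ c := by omega
  have hcl : ℓ ≤ c := by omega
  have hl0 : (0 : ℝ) < ℓ := by exact_mod_cast hℓ
  have hc0 : (0 : ℝ) < c := by exact_mod_cast hc1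
  set q : ℝ := 1 - Real.exp (-(c : ℝ) * κ * t) with hq
  have hqarg : -(c : ℝ) * κ * t ≤ 0 := by
    have : (0:ℝ) ≤ (c : ℝ) * κ * t := by positivity
    linarith
  have hq0 : 0 ≤ q := by
    have := Real.exp_le_one_iff.mpr hqarg
    rw [hq]; linarith
  have hq1 : q < 1 := by
    have := Real.exp_pos (-(c : ℝ) * κ * t)
    rw [hq]; linarith
  have hδ0 : 0 ≤ δ := by rw [hδ]; exact Real.rpow_nonneg hq0 _
  have hδ1 : δ < 1 := by rw [hδ]; exact Real.rpow_lt_one hq0 hq1 (by positivity)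
  refine ⟨hδ0, hδ1, ?_⟩
  have ha : 0 < (c : ℝ) * κ := by positivity
  have hpos : ∀ i : ℕ, 1 ≤ i → 0 < κ * (1 + (x₀ : ℝ) + ((i : ℝ) - 1) * (ℓ : ℝ)) := by
    intro i hi
    have hi1 : (1 : ℝ) ≤ (i : ℝ) := by exact_mod_cast hi
    have : (0:ℝ) ≤ ((i : ℝ) - 1) * (ℓ : ℝ) := mul_nonneg (by linarith) hl0.le
    have hx0 : (0:ℝ) ≤ (x₀ : ℝ) := Nat.cast_nonneg _
    nlinarith
  have hle : ∀ i ∈ Finset.Icc 1 n,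
      κ * (1 + (x₀ : ℝ) + ((i : ℝ) - 1) * (ℓ : ℝ)) ≤ ((c : ℝ) * κ) * i := by
    intro i hi
    have hi1 : (1 : ℝ) ≤ (i : ℝ) := by exact_mod_cast (Finset.mem_Icc.mp hi).1
    have hcxr : (x₀ : ℝ) + 1 ≤ c := by exact_mod_cast hcx
    have hclr : (ℓ : ℝ) ≤ c := by exact_mod_cast hcl
    have h1 : ((i : ℝ) - 1) * (ℓ : ℝ) ≤ ((i : ℝ) - 1) * (c : ℝ) :=
      mul_le_mul_of_nonneg_left hclr (by linarith)
    have h2 : 1 + (x₀ : ℝ) + ((i : ℝ) - 1) * (ℓ : ℝ) ≤ (c : ℝ) * i := by nlinarith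
    calc κ * (1 + (x₀ : ℝ) + ((i : ℝ) - 1) * (ℓ : ℝ)) ≤ κ * ((c : ℝ) * i) :=
          mul_le_mul_of_nonneg_left h2 hκ.le
      _ = ((c : ℝ) * κ) * i := by ring
  have key := prob_bound P e he_meas he_indep he_law ((c : ℝ) * κ) ha
    (fun i => κ * (1 + (x₀ : ℝ) + ((i : ℝ) - 1) * (ℓ : ℝ))) hpos n hle t ht
  have hqe : (1 - Real.exp (-(((c : ℝ) * κ) * t))) = q := by
    rw [show -(((c : ℝ) * κ) * t) = -(c : ℝ) * κ * t by ring]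
  rw [hqe] at key
  refine key.trans (ENNReal.ofReal_le_ofReal ?_)
  -- q ^ n ≤ C * δ ^ M
  rcases eq_or_lt_of_le hq0 with hq' | hq'
  · have hn1 : n ≠ 0 := by rw [hn]; exact Nat.succ_ne_zero _
    have hM1 : M ≠ 0 := by omega
    have hδz : δ = 0 := by
      rw [hδ, ← hq', Real.zero_rpow (by positivity)]
    rw [← hq', zero_pow hn1, hδz, zero_pow hM1, mul_zero]
  · have hMle : M ≤ x₀ + n * ℓ := by
      have h1 : M - x₀ < (M - x₀) / ℓ * ℓ + ℓ := Nat.lt_div_mul_add (by omega)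
      have h2 : n * ℓ = (M - x₀) / ℓ * ℓ + ℓ := by rw [hn, Nat.add_mul, Nat.one_mul]
      omega
    have hMler : (M : ℝ) ≤ (x₀ : ℝ) + (n : ℝ) * (ℓ : ℝ) := by exact_mod_cast hMle
    have hexpo : (-1 - (x₀ : ℝ) / (ℓ : ℝ)) + ((1 : ℝ) / (ℓ : ℝ)) * (M : ℝ) ≤ (n : ℝ) := by
      rw [← sub_nonneg]
      have heq : (n : ℝ) - ((-1 - (x₀ : ℝ) / (ℓ : ℝ)) + ((1 : ℝ) / (ℓ : ℝ)) * (M : ℝ))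
          = ((n : ℝ) * ℓ + ℓ + (x₀ : ℝ) - M) / ℓ := by
        field_simp
        ring
      rw [heq]
      apply div_nonneg _ hl0.le
      linarith
    have hCδ : C * δ ^ M = q ^ ((-1 - (x₀ : ℝ) / (ℓ : ℝ)) + ((1 : ℝ) / (ℓ : ℝ)) * (M : ℝ)) := by
      rw [hC, hδ, ← Real.rpow_natCast (q ^ ((1 : ℝ) / (ℓ : ℝ))) M,
        ← Real.rpow_mul hq0, ← Real.rpow_add hq']
    calc q ^ n = q ^ ((n : ℝ)) := (Real.rpow_natCast q n).symm
      _ ≤ q ^ ((-1 - (x₀ : ℝ) / (ℓ : ℝ)) + ((1 : ℝ) / (ℓ : ℝ)) * (M : ℝ)) :=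
          Real.rpow_le_rpow_of_exponent_ge hq' hq1.le hexpo
      _ = C * δ ^ M := hCδ.symm
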